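/- Let $r \geq 2$, let $H$ be a finite graph with no copy of the complete $r$-partite graph $K_{t,\dots,t}$ ($r$ parts of size $t$). Then $\mathrm{ind}_{\mathbb{Z}_r} \|\mathrm{Hom}(K_r, H)\| \leq (\binom{r}{2}+1)(t-1) - 1$, where $\mathrm{Hom}(K_r,H)$ is the order complex of the poset $\mathrm{Hom}_p(K_r,H)$ with the free cyclic-shift $\mathbb{Z}_r$-action. -/

import Mathlib

/-- The geometric realization of the order complex of a finite poset. -/
abbrev Realization (P : Type*) [PartialOrder P] [Fintype P] : Type _ :=
  {w : P → ℝ // (∀ x, 0 ≤ w x) ∧ (∑ x, w x) = 1 ∧ IsChain (· ≤ ·) {x | w x ≠ 0}}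

/-- The poset `Hom_p(K_r, H)`: tuples (indexed by `ZMod r`) of nonempty subsets of
`V(H)` with all cross-edges between distinct coordinates. -/
def KrHom (r : ℕ) {V : Type*} [DecidableEq V] (H : SimpleGraph V) : Type _ :=
  {A : ZMod r → Finset V //
    (∀ i, (A i).Nonempty) ∧
    ∀ i j, i ≠ j → ∀ x ∈ A i, ∀ y ∈ A j, H.Adj x y}

instance (r : ℕ) {V : Type*} [DecidableEq V] (H : SimpleGraph V) :
    PartialOrder (KrHom r H) where
  le A B := ∀ i, A.val i ⊆ B.val i
  le_refl A i := subset_rfl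
  le_trans A B C hAB hBC i := (hAB i).trans (hBC i)
  le_antisymm A B hAB hBA :=
    Subtype.ext (funext fun i => Finset.Subset.antisymm (hAB i) (hBA i))

instance (r : ℕ) [NeZero r] {V : Type*} [Fintype V] [DecidableEq V]
    (H : SimpleGraph V) [DecidableRel H.Adj] : Fintype (KrHom r H) := by
  unfold KrHom; infer_instance

/-- The cyclic-shift action of `k : ℤ_r` on `Hom_p(K_r, H)`: `(k • A)_j = A_{j+k}`. -/
def shiftK (r : ℕ) {V : Type*} [DecidableEq V] {H : SimpleGraph V} (k : ZMod r)
    (A : KrHom r H) : KrHom r H :=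
  ⟨fun j => A.val (j + k),
    ⟨fun j => A.prop.1 (j + k),
     fun i j hij x hx y hy =>
       A.prop.2 (i + k) (j + k) (fun h => hij (by simpa using add_right_cancel h))
         x hx y hy⟩⟩

/-- Vertex set of the join `(ℤ_r)^{*m}`, ordered by `(g, x) ≺₁ (h, y)` iff `x < y`;
its realization is an `E_{m-1}ℤ_r` space. -/
structure JoinVertexZ (r m : ℕ) where
  g : ZMod r
  i : Fin m

instance (r m : ℕ) : PartialOrder (JoinVertexZ r m) where
  le a b := a = b ∨ a.i < b.i
  le_refl a := Or.inl rfl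
  le_trans a b c hab hbc := by
    rcases hab with rfl | h
    · exact hbc
    · rcases hbc with rfl | h'
      · exact Or.inr h
      · exact Or.inr (h.trans h')
  le_antisymm a b hab hba := by
    rcases hab with rfl | h
    · rfl
    · rcases hba with rfl | h'
      · rfl
      · exact absurd h' (lt_asymm h)

instance (r m : ℕ) [NeZero r] : Fintype (JoinVertexZ r m) :=
  Fintype.ofEquiv (ZMod r × Fin m)
    ⟨fun p => ⟨p.1, p.2⟩, fun v => (v.g, v.i), fun _ => rfl, fun _ => rfl⟩

/-- The `ℤ_r`-index of `‖Hom(K_r, H)‖ = ‖Δ(Hom_p(K_r, H))‖`: the least `n` admitting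
a continuous `ℤ_r`-equivariant map to the `E_nℤ_r` space `‖Δ(ℤ_r × [n+1])‖`. -/
noncomputable def indZr (r : ℕ) [NeZero r] {V : Type*} [Fintype V] [DecidableEq V]
    (H : SimpleGraph V) [DecidableRel H.Adj] : ℕ :=
  sInf {n : ℕ | ∃ Φ : Realization (KrHom r H) → Realization (JoinVertexZ r (n + 1)),
    Continuous Φ ∧
    ∀ (k : ZMod r) (x y : Realization (KrHom r H)),
      (∀ q : KrHom r H, y.val q = x.val (shiftK r (-k) q)) →
      ∀ p : JoinVertexZ r (n + 1), (Φ y).val p = (Φ x).val ⟨p.g - k, p.i⟩}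

section AuxProof

variable {r : ℕ} {V : Type*} [DecidableEq V] {H : SimpleGraph V}

lemma krhom_disjoint (A : KrHom r H) {i j : ZMod r} (hij : i ≠ j) :
    Disjoint (A.val i) (A.val j) := by
  rw [Finset.disjoint_left]
  intro x hx hx'
  exact H.loopless.irrefl x (A.prop.2 i j hij x hx x hx')

lemma shiftK_val (k : ZMod r) (A : KrHom r H) (j : ZMod r) :
    (shiftK r k A).val j = A.val (j + k) := rfl

lemma shiftK_shiftK (k k' : ZMod r) (A : KrHom r H) :
    shiftK r k (shiftK r k' A) = shiftK r (k + k') A :=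
  Subtype.ext (funext fun j => congrArg A.val (add_assoc j k k'))

lemma shiftK_zero (A : KrHom r H) : shiftK r (0 : ZMod r) A = A :=
  Subtype.ext (funext fun j => congrArg A.val (add_zero j))

lemma shiftK_neg_shiftK (k : ZMod r) (A : KrHom r H) :
    shiftK r (-k) (shiftK r k A) = A := by
  rw [shiftK_shiftK, neg_add_cancel, shiftK_zero]

lemma shiftK_shiftK_neg (k : ZMod r) (A : KrHom r H) :
    shiftK r k (shiftK r (-k) A) = A := by
  rw [shiftK_shiftK, add_neg_cancel, shiftK_zero]

lemma shiftK_mono {k : ZMod r} {A B : KrHom r H} (h : A ≤ B) :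
    shiftK r k A ≤ shiftK r k B := fun j => h (j + k)

variable [NeZero r]

/-- The level function: `ℓ(A) = ∑ⱼ (min(|Aⱼ|, t) - 1)`. -/
def ell (t : ℕ) (A : KrHom r H) : ℕ := ∑ j : ZMod r, (min (A.val j).card t - 1)

lemma ell_shiftK (t : ℕ) (k : ZMod r) (A : KrHom r H) :
    ell t (shiftK r k A) = ell t A :=
  Fintype.sum_equiv (Equiv.addRight k) _ _ (fun _ => rfl)

lemma ell_mono (t : ℕ) {A B : KrHom r H} (h : A ≤ B) : ell t A ≤ ell t B :=
  Finset.sum_le_sum fun j _ =>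
    Nat.sub_le_sub_right (min_le_min (Finset.card_le_card (h j)) le_rfl) 1

/-- The frozen-pattern invariant. -/
def phi0 (t : ℕ) (A : KrHom r H) : ZMod r → Option (Finset V) :=
  fun j => if (A.val j).card < t then some (A.val j) else none

lemma phi0_eq_of_le (t : ℕ) {A B : KrHom r H} (h : A ≤ B) (he : ell t A = ell t B) :
    phi0 t A = phi0 t B := by
  have hpt : ∀ j ∈ (Finset.univ : Finset (ZMod r)),
      min (A.val j).card t - 1 = min (B.val j).card t - 1 :=
    (Finset.sum_eq_sum_iff_of_le (fun j _ => Nat.sub_le_sub_right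
      (min_le_min (Finset.card_le_card (h j)) le_rfl) 1)).1 he
  funext j
  have hcA : 1 ≤ (A.val j).card := Finset.card_pos.2 (A.prop.1 j)
  have hcB : 1 ≤ (B.val j).card := Finset.card_pos.2 (B.prop.1 j)
  have hAB : (A.val j).card ≤ (B.val j).card := Finset.card_le_card (h j)
  rcases Nat.eq_zero_or_pos t with rfl | ht
  · simp [phi0]
  · have hmin : min (A.val j).card t = min (B.val j).card t := by
      have h1 : 1 ≤ min (A.val j).card t := le_min hcA ht
      have h2 : 1 ≤ min (B.val j).card t := le_min hcB ht
      have h3 := hpt j (Finset.mem_univ j)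
      omega
    unfold phi0
    by_cases hA : (A.val j).card < t
    · have hminA : min (A.val j).card t = (A.val j).card := min_eq_left hA.le
      have hb : (B.val j).card < t := by
        by_contra hb
        have : min (B.val j).card t = t := min_eq_right (le_of_not_gt hb)
        omega
      have hminB : min (B.val j).card t = (B.val j).card := min_eq_left hb.le
      have heq : A.val j = B.val j :=
        Finset.eq_of_subset_of_card_le (h j) (by omega)
      rw [if_pos hA, if_pos hb, heq]
    · have hb : ¬ (B.val j).card < t := by omega
      rw [if_neg hA, if_neg hb]

/-- Comparability-at-fixed-level relation. -/
def eps (t : ℕ) : KrHom r H → KrHom r H → Prop :=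
  fun A B => ell t A = ell t B ∧ (A ≤ B ∨ B ≤ A)

lemma phi0_eq_of_eqv (t : ℕ) {A B : KrHom r H}
    (h : Relation.EqvGen (eps t) A B) : phi0 t A = phi0 t B := by
  induction h with
  | rel x y hxy =>
    rcases hxy with ⟨he, h | h⟩
    · exact phi0_eq_of_le t h he
    · exact (phi0_eq_of_le t h he.symm).symm
  | refl => rfl
  | symm _ _ _ ih => exact ih.symm
  | trans _ _ _ _ _ ih1 ih2 => exact ih1.trans ih2

lemma eqv_shiftK (t : ℕ) {A B : KrHom r H} (k : ZMod r)
    (h : Relation.EqvGen (eps t) A B) :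
    Relation.EqvGen (eps t) (shiftK r k A) (shiftK r k B) := by
  induction h with
  | rel x y hxy =>
    refine Relation.EqvGen.rel _ _ ⟨?_, ?_⟩
    · rw [ell_shiftK, ell_shiftK]; exact hxy.1
    · rcases hxy.2 with h | h
      · exact Or.inl (shiftK_mono h)
      · exact Or.inr (shiftK_mono h)
  | refl x => exact Relation.EqvGen.refl _
  | symm _ _ _ ih => exact Relation.EqvGen.symm _ _ ih
  | trans _ _ _ _ _ ih1 ih2 => exact Relation.EqvGen.trans _ _ _ ih1 ih2

lemma exists_card_lt {t : ℕ} (hr : 2 ≤ r)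
    (hH : ¬ ∃ U : Fin r → Finset V,
      (∀ i, (U i).card = t) ∧
      (∀ i j, i ≠ j → Disjoint (U i) (U j)) ∧
      (∀ i j, i ≠ j → ∀ x ∈ U i, ∀ y ∈ U j, H.Adj x y))
    (A : KrHom r H) : ∃ j : ZMod r, (A.val j).card < t := by
  by_contra hcon
  push_neg at hcon
  apply hH
  have hch : ∀ i : Fin r, ∃ s ⊆ A.val ((i : ℕ) : ZMod r), s.card = t :=
    fun i => Finset.exists_subset_card_eq (hcon _)
  have hinj : ∀ i j : Fin r, i ≠ j → ((i : ℕ) : ZMod r) ≠ ((j : ℕ) : ZMod r) := by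
    intro i j hij heq
    apply hij
    have h2 := congrArg ZMod.val heq
    rwa [ZMod.val_cast_of_lt i.2, ZMod.val_cast_of_lt j.2, ← Fin.ext_iff] at h2
  refine ⟨fun i => (hch i).choose, fun i => (hch i).choose_spec.2, ?_, ?_⟩
  · intro i j hij
    exact Finset.disjoint_of_subset_left (hch i).choose_spec.1
      (Finset.disjoint_of_subset_right (hch j).choose_spec.1
        (krhom_disjoint A (hinj i j hij)))
  · intro i j hij x hx y hy
    exact A.prop.2 _ _ (hinj i j hij) x ((hch i).choose_spec.1 hx)
      y ((hch j).choose_spec.1 hy)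

lemma ell_lt {t : ℕ} (hr : 2 ≤ r)
    (hH : ¬ ∃ U : Fin r → Finset V,
      (∀ i, (U i).card = t) ∧
      (∀ i j, i ≠ j → Disjoint (U i) (U j)) ∧
      (∀ i j, i ≠ j → ∀ x ∈ U i, ∀ y ∈ U j, H.Adj x y))
    (A : KrHom r H) : ell t A < r * (t - 1) := by
  obtain ⟨j0, hj0⟩ := exists_card_lt hr hH A
  have h1 : 1 ≤ (A.val j0).card := Finset.card_pos.2 (A.prop.1 j0)
  have hlt := Finset.sum_lt_sum (s := (Finset.univ : Finset (ZMod r)))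
    (f := fun j : ZMod r => min (A.val j).card t - 1) (g := fun _ => t - 1)
    (fun j _ => Nat.sub_le_sub_right (min_le_right _ _) 1)
    ⟨j0, Finset.mem_univ j0, by
      show min (A.val j0).card t - 1 < t - 1
      rw [min_eq_left hj0.le]; omega⟩
  have hsum : ∑ _j : ZMod r, (t - 1) = r * (t - 1) := by
    rw [Finset.sum_const, Finset.card_univ, ZMod.card, smul_eq_mul]
  rw [hsum] at hlt
  exact hlt

end AuxProof


section MainConstruction

variable {r : ℕ} [NeZero r] {V : Type*} [DecidableEq V] {H : SimpleGraph V}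

lemma exists_good_map {t : ℕ} (m : ℕ) (hr : 2 ≤ r)
    (hH : ¬ ∃ U : Fin r → Finset V,
      (∀ i, (U i).card = t) ∧
      (∀ i j, i ≠ j → Disjoint (U i) (U j)) ∧
      (∀ i j, i ≠ j → ∀ x ∈ U i, ∀ y ∈ U j, H.Adj x y))
    (hm : r * (t - 1) ≤ m) :
    ∃ f : KrHom r H → JoinVertexZ r m,
      (∀ A B : KrHom r H, A ≤ B → f A ≤ f B) ∧
      ∀ (k : ZMod r) (A : KrHom r H), f (shiftK r k A) = ⟨(f A).g + k, (f A).i⟩ := by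
  classical
  -- freeness of the shift action on `EqvGen (eps t)`-classes
  have hfree : ∀ (k : ZMod r) (A : KrHom r H),
      Relation.EqvGen (eps t) (shiftK r k A) A → k = 0 := by
    intro k A h
    by_contra hk
    obtain ⟨j0, hj0⟩ := exists_card_lt hr hH A
    have hphi := phi0_eq_of_eqv t h
    have hshift : ∀ j : ZMod r, phi0 t A (j + k) = phi0 t A j := fun j => congrFun hphi j
    have h2 : phi0 t A (j0 + k) = some (A.val j0) := by
      rw [hshift]; simp [phi0, hj0]
    have h3 : A.val (j0 + k) = A.val j0 := by
      by_cases hc : (A.val (j0 + k)).card < t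
      · simpa [phi0, hc] using h2
      · simp [phi0, hc] at h2
    obtain ⟨x, hx⟩ := A.prop.1 j0
    have hne : j0 + k ≠ j0 := fun hh => hk (by simpa using hh)
    exact H.loopless.irrefl x (A.prop.2 (j0 + k) j0 hne x (h3 ▸ hx) x hx)
  -- the orbit-of-component setoid
  let S : Setoid (KrHom r H) :=
    ⟨fun A B => ∃ k, Relation.EqvGen (eps t) (shiftK r k A) B,
     ⟨fun A => ⟨0, by rw [shiftK_zero]; exact Relation.EqvGen.refl A⟩,
      fun {A B} h => by
        obtain ⟨k, hk⟩ := h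
        refine ⟨-k, ?_⟩
        have := eqv_shiftK t (-k) hk
        rw [shiftK_neg_shiftK] at this
        exact Relation.EqvGen.symm _ _ this,
      fun {A B C} h h' => by
        obtain ⟨k, hk⟩ := h
        obtain ⟨k', hk'⟩ := h'
        refine ⟨k + k', ?_⟩
        have := eqv_shiftK t k' hk
        rw [shiftK_shiftK, add_comm k' k] at this
        exact Relation.EqvGen.trans _ _ _ this hk'⟩⟩
  let rep : KrHom r H → KrHom r H := fun A => (Quotient.mk S A).out
  have hrep : ∀ A : KrHom r H, ∃ k, Relation.EqvGen (eps t) (shiftK r k (rep A)) A :=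
    fun A => Quotient.exact (Quotient.out_eq (Quotient.mk S A))
  have hrep_eq : ∀ A B : KrHom r H,
      (∃ k, Relation.EqvGen (eps t) (shiftK r k A) B) → rep A = rep B :=
    fun A B h => congrArg Quotient.out (Quotient.sound h)
  have huniq : ∀ (C X : KrHom r H) (k k' : ZMod r),
      Relation.EqvGen (eps t) (shiftK r k C) X →
      Relation.EqvGen (eps t) (shiftK r k' C) X → k = k' := by
    intro C X k k' h h'
    have h2 : Relation.EqvGen (eps t) (shiftK r (k - k') (shiftK r k' C)) (shiftK r k' C) := by
      rw [shiftK_shiftK]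
      have he : k - k' + k' = k := by ring
      rw [he]
      exact Relation.EqvGen.trans _ _ _ h (Relation.EqvGen.symm _ _ h')
    have := hfree _ _ h2
    exact sub_eq_zero.mp this
  let g : KrHom r H → ZMod r := fun A => (hrep A).choose
  have hg : ∀ A, Relation.EqvGen (eps t) (shiftK r (g A) (rep A)) A :=
    fun A => (hrep A).choose_spec
  have hg_eqv : ∀ A B, Relation.EqvGen (eps t) A B → g A = g B := by
    intro A B h
    have hAB : rep A = rep B := hrep_eq A B ⟨0, by rw [shiftK_zero]; exact h⟩
    exact huniq (rep A) B (g A) (g B) (Relation.EqvGen.trans _ _ _ (hg A) h)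
      (by rw [hAB]; exact hg B)
  have hg_shift : ∀ (k : ZMod r) (A : KrHom r H), g (shiftK r k A) = g A + k := by
    intro k A
    have h1 : rep (shiftK r k A) = rep A := by
      refine hrep_eq _ _ ⟨-k, ?_⟩
      rw [shiftK_neg_shiftK]
      exact Relation.EqvGen.refl _
    refine huniq (rep A) (shiftK r k A) _ _ ?_ ?_
    · have h2 := hg (shiftK r k A); rwa [h1] at h2
    · have h2 := eqv_shiftK t k (hg A)
      rwa [shiftK_shiftK, add_comm k (g A)] at h2
  have hlt : ∀ A : KrHom r H, ell t A < m :=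
    fun A => lt_of_lt_of_le (ell_lt hr hH A) hm
  refine ⟨fun A => ⟨g A, ⟨ell t A, hlt A⟩⟩, ?_, ?_⟩
  · intro A B hAB
    rcases eq_or_lt_of_le (ell_mono t hAB) with he | hlt'
    · left
      have hgAB : g A = g B := hg_eqv A B (Relation.EqvGen.rel _ _ ⟨he, Or.inl hAB⟩)
      simp [hgAB, he]
    · right
      exact hlt'
  · intro k A
    have h1 := hg_shift k A
    have h2 := ell_shiftK t k A
    simp [h1, h2]

end MainConstruction


lemma indZr_le_of_map (r : ℕ) [NeZero r] {V : Type*} [Fintype V] [DecidableEq V]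
    (H : SimpleGraph V) [DecidableRel H.Adj] {n : ℕ}
    (f : KrHom r H → JoinVertexZ r (n + 1))
    (hmono : ∀ A B : KrHom r H, A ≤ B → f A ≤ f B)
    (hequiv : ∀ (k : ZMod r) (A : KrHom r H),
      f (shiftK r k A) = ⟨(f A).g + k, (f A).i⟩) :
    indZr r H ≤ n := by
  classical
  apply Nat.sInf_le
  refine ⟨fun w => ⟨fun p => ∑ q : KrHom r H, if f q = p then w.val q else 0,
    ?_, ?_, ?_⟩, ?_, ?_⟩
  · intro p
    refine Finset.sum_nonneg fun q _ => ?_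
    split
    · exact w.prop.1 q
    · exact le_refl 0
  · rw [Finset.sum_comm]
    simp only [Finset.sum_ite_eq, Finset.mem_univ, if_true]
    exact w.prop.2.1
  · intro p hp p' hp' hne
    obtain ⟨q, -, hq⟩ := Finset.exists_ne_zero_of_sum_ne_zero hp
    obtain ⟨q', -, hq'⟩ := Finset.exists_ne_zero_of_sum_ne_zero hp'
    have hfq : f q = p ∧ w.val q ≠ 0 := by
      by_cases h : f q = p
      · exact ⟨h, by simpa [h] using hq⟩
      · simp [h] at hq
    have hfq' : f q' = p' ∧ w.val q' ≠ 0 := by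
      by_cases h : f q' = p'
      · exact ⟨h, by simpa [h] using hq'⟩
      · simp [h] at hq'
    rcases eq_or_ne q q' with rfl | hqq
    · exact absurd (hfq.1.symm.trans hfq'.1) hne
    · rcases w.prop.2.2 hfq.2 hfq'.2 hqq with h | h
      · left
        rw [← hfq.1, ← hfq'.1]
        exact hmono _ _ h
      · right
        rw [← hfq.1, ← hfq'.1]
        exact hmono _ _ h
  · apply Continuous.subtype_mk
    apply continuous_pi
    intro p
    apply continuous_finset_sum
    intro q _
    by_cases h : f q = p
    · simp only [h, if_true]
      exact (continuous_apply q).comp continuous_subtype_val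
    · simp only [h, if_false]
      exact continuous_const
  · intro k x y hxy p
    simp only
    rw [Finset.sum_congr rfl fun q _ => by rw [hxy q]]
    refine Eq.symm (Fintype.sum_equiv
      ⟨shiftK r k, shiftK r (-k), fun A => shiftK_neg_shiftK k A,
        fun A => shiftK_shiftK_neg k A⟩
      (fun q => if f q = (⟨p.g - k, p.i⟩ : JoinVertexZ r (n + 1)) then x.val q else 0)
      (fun q => if f q = p then x.val (shiftK r (-k) q) else 0) ?_)
    intro q
    show (if f q = (⟨p.g - k, p.i⟩ : JoinVertexZ r (n + 1)) then x.val q else 0)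
      = (if f (shiftK r k q) = p then x.val (shiftK r (-k) (shiftK r k q)) else 0)
    rw [shiftK_neg_shiftK, hequiv k q]
    refine if_congr ?_ rfl rfl
    constructor
    · intro h
      rw [h]
      show (⟨p.g - k + k, p.i⟩ : JoinVertexZ r (n + 1)) = p
      have hgk : p.g - k + k = p.g := by ring
      rw [hgk]
    · intro h
      rw [← h]
      show f q = (⟨(f q).g + k - k, (f q).i⟩ : JoinVertexZ r (n + 1))
      have hgk : (f q).g + k - k = (f q).g := by ring
      rw [hgk]


/-- If `H` contains no complete `r`-partite subgraph `K_{t,…,t}`, then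
`ind_{ℤ_r} ‖Hom(K_r, H)‖ ≤ (C(r,2) + 1)(t - 1) - 1`. -/
theorem indZr_hom_le
    (r : ℕ) (hr : 2 ≤ r) [NeZero r] {V : Type*} [Fintype V] [DecidableEq V]
    (H : SimpleGraph V) [DecidableRel H.Adj] (t : ℕ)
    (hH : ¬ ∃ U : Fin r → Finset V,
      (∀ i, (U i).card = t) ∧
      (∀ i j, i ≠ j → Disjoint (U i) (U j)) ∧
      (∀ i j, i ≠ j → ∀ x ∈ U i, ∀ y ∈ U j, H.Adj x y)) :
    indZr r H ≤ (Nat.choose r 2 + 1) * (t - 1) - 1 := by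
  have hrc : r ≤ Nat.choose r 2 + 1 := by
    have h2 : r - 1 ≤ r.choose 2 := by
      rw [Nat.choose_two_right]
      rw [Nat.le_div_iff_mul_le (by norm_num : 0 < 2)]
      calc (r - 1) * 2 ≤ (r - 1) * r := Nat.mul_le_mul_left _ hr
        _ = r * (r - 1) := Nat.mul_comm _ _
    omega
  have hm : r * (t - 1) ≤ (Nat.choose r 2 + 1) * (t - 1) - 1 + 1 := by
    rcases Nat.lt_or_ge t 2 with ht | ht
    · have h0 : t - 1 = 0 := by omega
      simp [h0]
    · have h1 : 1 ≤ (Nat.choose r 2 + 1) * (t - 1) :=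
        Nat.mul_pos (by omega) (by omega)
      have h2 : (Nat.choose r 2 + 1) * (t - 1) - 1 + 1
          = (Nat.choose r 2 + 1) * (t - 1) := by omega
      rw [h2]
      exact Nat.mul_le_mul_right _ hrc
  obtain ⟨f, hmono, hequiv⟩ :=
    exists_good_map ((Nat.choose r 2 + 1) * (t - 1) - 1 + 1) hr hH hm
  exact indZr_le_of_map r H f hmono hequiv
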